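/- The Dobrushin coefficient is sub-multiplicative: for any two Markov transition kernels K and R on a measurable space X, δ(K ∘ R) ≤ δ(K) · δ(R), where δ(K) := sup over pairs of points x, x' in X of the total variation distance between K(x, ·) and K(x', ·). -/

import Mathlib

open MeasureTheory ProbabilityTheory

/-- Total variation distance between two measures:
`‖μ - ν‖_TV = sup over measurable A of |μ(A) - ν(A)|`. -/
noncomputable def tvDist {X : Type*} [MeasurableSpace X] (μ ν : Measure X) : ℝ :=
  ⨆ A : {s : Set X // MeasurableSet s}, |(μ A.1).toReal - (ν A.1).toReal|

/-- Dobrushin coefficient of a kernel: `δ(K) = sup_{x,x'} ‖K(x,·) - K(x',·)‖_TV`. -/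
noncomputable def dobrushin {X : Type*} [MeasurableSpace X] (K : Kernel X X) : ℝ :=
  ⨆ p : X × X, tvDist (K p.1) (K p.2)

section Aux

variable {X : Type*} [MeasurableSpace X]

lemma tvDist_term_le_one (μ ν : Measure X) [IsProbabilityMeasure μ] [IsProbabilityMeasure ν]
    (A : {s : Set X // MeasurableSet s}) :
    |(μ A.1).toReal - (ν A.1).toReal| ≤ 1 := by
  have h1 : (μ A.1).toReal ≤ 1 := by
    simpa using ENNReal.toReal_mono (by simp) (prob_le_one (μ := μ) (s := A.1))
  have h2 : (ν A.1).toReal ≤ 1 := by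
    simpa using ENNReal.toReal_mono (by simp) (prob_le_one (μ := ν) (s := A.1))
  have h3 : (0:ℝ) ≤ (μ A.1).toReal := ENNReal.toReal_nonneg
  have h4 : (0:ℝ) ≤ (ν A.1).toReal := ENNReal.toReal_nonneg
  rw [abs_le]; constructor <;> linarith

lemma tvDist_le_one (μ ν : Measure X) [IsProbabilityMeasure μ] [IsProbabilityMeasure ν] :
    tvDist μ ν ≤ 1 := by
  refine ciSup_le (fun A => tvDist_term_le_one μ ν A)

lemma abs_le_tvDist (μ ν : Measure X) [IsProbabilityMeasure μ] [IsProbabilityMeasure ν]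
    {A : Set X} (hA : MeasurableSet A) :
    |(μ A).toReal - (ν A).toReal| ≤ tvDist μ ν :=
  le_ciSup (f := fun B : {s : Set X // MeasurableSet s} => |(μ B.1).toReal - (ν B.1).toReal|)
    ⟨1, by rintro r ⟨B, rfl⟩; exact tvDist_term_le_one μ ν B⟩
    (⟨A, hA⟩ : {s : Set X // MeasurableSet s})

lemma tvDist_nonneg (μ ν : Measure X) [IsProbabilityMeasure μ] [IsProbabilityMeasure ν] :
    0 ≤ tvDist μ ν :=
  le_trans (abs_nonneg _) (abs_le_tvDist μ ν MeasurableSet.empty)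

lemma tvDist_le_dobrushin (K : Kernel X X) [IsMarkovKernel K] (x x' : X) :
    tvDist (K x) (K x') ≤ dobrushin K :=
  le_ciSup (f := fun p : X × X => tvDist (K p.1) (K p.2))
    ⟨1, by rintro r ⟨p, rfl⟩; exact tvDist_le_one _ _⟩ ((x, x') : X × X)

lemma integrable_of_bounded {μ : Measure X} [IsFiniteMeasure μ] {f : X → ℝ}
    (hf : Measurable f) (hb : ∀ y, |f y| ≤ 1) : Integrable f μ :=
  (integrable_const (1:ℝ)).mono' hf.aestronglyMeasurable
    (Filter.Eventually.of_forall fun y => by simpa using hb y)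

/-- Key one-sided estimate. -/
lemma integral_sub_integral_le [Nonempty X] (μ ν : Measure X)
    [IsProbabilityMeasure μ] [IsProbabilityMeasure ν]
    {f : X → ℝ} (hf : Measurable f) (h0 : ∀ y, 0 ≤ f y) (h1 : ∀ y, f y ≤ 1)
    {C D : ℝ} (hC : ∀ y y', f y - f y' ≤ C)
    (hD : ∀ s : Set X, MeasurableSet s → (μ s).toReal - (ν s).toReal ≤ D)
    (hC0 : 0 ≤ C) :
    ∫ y, f y ∂μ - ∫ y, f y ∂ν ≤ C * D := by
  obtain ⟨s, hs, hss, hsc⟩ := hahn_decomposition (μ := μ) (ν := ν)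
  have hb : ∀ y, |f y| ≤ 1 := fun y => abs_le.2 ⟨by linarith [h0 y], h1 y⟩
  -- restricted measure comparisons
  have hle : ν.restrict s ≤ μ.restrict s := by
    refine Measure.le_iff.2 fun t ht => ?_
    rw [Measure.restrict_apply ht, Measure.restrict_apply ht]
    exact hss _ (ht.inter hs) Set.inter_subset_right
  have hle' : μ.restrict sᶜ ≤ ν.restrict sᶜ := by
    refine Measure.le_iff.2 fun t ht => ?_
    rw [Measure.restrict_apply ht, Measure.restrict_apply ht]
    exact hsc _ (ht.inter hs.compl) Set.inter_subset_right
  set lam := μ.restrict s - ν.restrict s with hlam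
  set lam' := ν.restrict sᶜ - μ.restrict sᶜ with hlam'
  haveI : IsFiniteMeasure lam := isFiniteMeasure_of_le (μ.restrict s) Measure.sub_le
  haveI : IsFiniteMeasure lam' := isFiniteMeasure_of_le (ν.restrict sᶜ) Measure.sub_le
  -- totals
  have hνs : ν s ≤ μ s := hss s hs subset_rfl
  have hμsc : μ sᶜ ≤ ν sᶜ := hsc sᶜ hs.compl subset_rfl
  have hlamU : (lam Set.univ).toReal = (μ s).toReal - (ν s).toReal := by
    rw [hlam, Measure.sub_apply MeasurableSet.univ hle]
    simp only [Measure.restrict_apply_univ]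
    exact ENNReal.toReal_sub_of_le hνs (measure_ne_top μ s)
  have hlam'U : (lam' Set.univ).toReal = (ν sᶜ).toReal - (μ sᶜ).toReal := by
    rw [hlam', Measure.sub_apply MeasurableSet.univ hle']
    simp only [Measure.restrict_apply_univ]
    exact ENNReal.toReal_sub_of_le hμsc (measure_ne_top ν sᶜ)
  set d : ℝ := (μ s).toReal - (ν s).toReal with hd
  have hd0 : 0 ≤ d := by
    rw [hd]; simp only [sub_nonneg]
    exact ENNReal.toReal_mono (measure_ne_top μ s) hνs
  have hcomplμ : (μ s).toReal + (μ sᶜ).toReal = 1 := by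
    rw [← ENNReal.toReal_add (measure_ne_top μ s) (measure_ne_top μ sᶜ),
      measure_add_measure_compl hs]
    simp
  have hcomplν : (ν s).toReal + (ν sᶜ).toReal = 1 := by
    rw [← ENNReal.toReal_add (measure_ne_top ν s) (measure_ne_top ν sᶜ),
      measure_add_measure_compl hs]
    simp
  have hd' : (ν sᶜ).toReal - (μ sᶜ).toReal = d := by rw [hd]; linarith
  -- integrability
  have hiμ : Integrable f μ := integrable_of_bounded hf hb
  have hiν : Integrable f ν := integrable_of_bounded hf hb
  have hilam : Integrable f lam := integrable_of_bounded hf hb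
  have hilam' : Integrable f lam' := integrable_of_bounded hf hb
  -- decomposition of integrals
  have hsplitμ : ∫ y in s, f y ∂μ + ∫ y in sᶜ, f y ∂μ = ∫ y, f y ∂μ :=
    integral_add_compl hs hiμ
  have hsplitν : ∫ y in s, f y ∂ν + ∫ y in sᶜ, f y ∂ν = ∫ y, f y ∂ν :=
    integral_add_compl hs hiν
  have haddμ : ∫ y in s, f y ∂μ = ∫ y, f y ∂lam + ∫ y in s, f y ∂ν := by
    conv_lhs => rw [← Measure.sub_add_cancel_of_le hle]
    exact integral_add_measure hilam (integrable_of_bounded hf hb)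
  have haddν : ∫ y in sᶜ, f y ∂ν = ∫ y, f y ∂lam' + ∫ y in sᶜ, f y ∂μ := by
    conv_lhs => rw [← Measure.sub_add_cancel_of_le hle']
    exact integral_add_measure hilam' (integrable_of_bounded hf hb)
  -- bounds M, m
  have hbdd : BddAbove (Set.range f) := ⟨1, by rintro r ⟨y, rfl⟩; exact h1 y⟩
  have hbdd' : BddBelow (Set.range f) := ⟨0, by rintro r ⟨y, rfl⟩; exact h0 y⟩
  set M : ℝ := ⨆ y, f y with hM
  set m : ℝ := ⨅ y, f y with hm
  have hfM : ∀ y, f y ≤ M := fun y => le_ciSup hbdd y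
  have hmf : ∀ y, m ≤ f y := fun y => ciInf_le hbdd' y
  have hMm : M - m ≤ C := by
    rw [sub_le_iff_le_add, hM]
    refine ciSup_le fun y => ?_
    rw [add_comm, ← sub_le_iff_le_add, hm]
    exact le_ciInf fun y' => by linarith [hC y y']
  -- integral bounds
  have hup : ∫ y, f y ∂lam ≤ M * d := by
    calc ∫ y, f y ∂lam ≤ ∫ _y, M ∂lam :=
          integral_mono hilam (integrable_const M) hfM
      _ = (lam Set.univ).toReal * M := by rw [integral_const]; simp [smul_eq_mul, Measure.real]
      _ = M * d := by rw [hlamU]; ring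
  have hlow : m * d ≤ ∫ y, f y ∂lam' := by
    calc m * d = (lam' Set.univ).toReal * m := by rw [hlam'U, hd']; ring
      _ = ∫ _y, m ∂lam' := by rw [integral_const]; simp [smul_eq_mul, Measure.real]
      _ ≤ ∫ y, f y ∂lam' := integral_mono (integrable_const m) hilam' hmf
  have key : ∫ y, f y ∂μ - ∫ y, f y ∂ν ≤ (M - m) * d := by
    have : ∫ y, f y ∂μ - ∫ y, f y ∂ν = ∫ y, f y ∂lam - ∫ y, f y ∂lam' := by
      linarith [hsplitμ, hsplitν, haddμ, haddν]
    rw [this]; nlinarith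
  calc ∫ y, f y ∂μ - ∫ y, f y ∂ν ≤ (M - m) * d := key
    _ ≤ C * d := mul_le_mul_of_nonneg_right hMm hd0
    _ ≤ C * D := mul_le_mul_of_nonneg_left (hD s hs) hC0

end Aux

/-- Sub-multiplicativity of the Dobrushin coefficient: `δ(K ∘ R) ≤ δ(K) * δ(R)`,
where `(K ∘ R)(x, A) = ∫ R(y, A) K(x, dy)`, i.e. `R ∘ₖ K` in Mathlib's convention. -/
theorem dobrushin_comp_le {X : Type*} [MeasurableSpace X] (K R : Kernel X X)
    [IsMarkovKernel K] [IsMarkovKernel R] :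
    dobrushin (R ∘ₖ K) ≤ dobrushin K * dobrushin R := by
  rcases isEmpty_or_nonempty X with hX | hX
  · haveI : IsEmpty (X × X) := by infer_instance
    rw [dobrushin, Real.iSup_of_isEmpty, dobrushin, Real.iSup_of_isEmpty]
    simp
  refine ciSup_le fun p => ?_
  obtain ⟨x, x'⟩ := p
  refine ciSup_le fun A => ?_
  obtain ⟨A, hA⟩ := A
  -- express composed kernel measures as real integrals
  have hrepr : ∀ z : X, (((R ∘ₖ K) z) A).toReal = ∫ y, ((R y) A).toReal ∂(K z) := by
    intro z
    rw [Kernel.comp_apply' R K z hA]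
    rw [integral_toReal ((Kernel.measurable_coe R hA).aemeasurable)
      (Filter.Eventually.of_forall fun y => lt_of_le_of_lt (prob_le_one) (by simp))]
  set f : X → ℝ := fun y => ((R y) A).toReal with hfdef
  have hf : Measurable f := (Kernel.measurable_coe R hA).ennreal_toReal
  have h0 : ∀ y, 0 ≤ f y := fun y => ENNReal.toReal_nonneg
  have h1 : ∀ y, f y ≤ 1 := fun y => by
    simpa [hfdef] using ENNReal.toReal_mono (by simp) (prob_le_one (μ := R y) (s := A))
  have hC : ∀ y y', f y - f y' ≤ dobrushin R := fun y y' =>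
    le_trans (le_trans (le_abs_self _) (abs_le_tvDist (R y) (R y') hA))
      (tvDist_le_dobrushin R y y')
  have hC0 : 0 ≤ dobrushin R := by
    obtain ⟨y⟩ := hX
    exact le_trans (tvDist_nonneg (R y) (R y)) (tvDist_le_dobrushin R y y)
  have hD : ∀ z z' : X, ∀ s : Set X, MeasurableSet s →
      ((K z) s).toReal - ((K z') s).toReal ≤ dobrushin K := fun z z' s hs =>
    le_trans (le_trans (le_abs_self _) (abs_le_tvDist (K z) (K z') hs))
      (tvDist_le_dobrushin K z z')
  have hmain : ∀ z z' : X, ∫ y, f y ∂(K z) - ∫ y, f y ∂(K z') ≤ dobrushin R * dobrushin K :=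
    fun z z' => integral_sub_integral_le (K z) (K z') hf h0 h1 hC (hD z z') hC0
  rw [abs_le]
  constructor
  · have := hmain x' x
    rw [hrepr x, hrepr x']; linarith [this]
  · rw [hrepr x, hrepr x']
    linarith [hmain x x']
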